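/- Let C ⊆ ℝ² be a nonempty compact convex set, let x̲ = inf{q₁ : (q₁,q₂) ∈ C} and x̄ = sup{q₁ : (q₁,q₂) ∈ C}, and let p = (p₁,p₂) ∈ ℝ² satisfy x̲ < p₁ < x̄. Then p lies in the interior of C if and only if there exist points q, q′ ∈ C with q₁ = q′₁ = p₁, q₂ < p₂, and q′₂ > p₂. Equivalently, a point whose first coordinate lies strictly between the horizontal extremes of C is outside the interior of C exactly when it lies weakly above every point of the vertical fiber of C at p₁ or weakly below every such point. -/

import Mathlib

open Set

lemma halfball_right {C : Set (ℝ × ℝ)} (hconv : Convex ℝ C)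
    (p q q' r : ℝ × ℝ) (hq : q ∈ C) (hq' : q' ∈ C) (hr : r ∈ C)
    (hq1 : q.1 = p.1) (hq'1 : q'.1 = p.1)
    (hq2 : q.2 < p.2) (hq'2 : p.2 < q'.2) (hr1 : p.1 < r.1) :
    ∃ δ > 0, ∀ u : ℝ × ℝ, dist u p < δ → p.1 ≤ u.1 → u ∈ C := by
  set d : ℝ := r.1 - p.1 with hd
  have hd0 : 0 < d := by simp only [hd]; linarith
  set K : ℝ := |p.2 - r.2| with hK
  have hK0 : 0 ≤ K := abs_nonneg _
  set ε : ℝ := min (p.2 - q.2) (q'.2 - p.2) with hε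
  have hε0 : 0 < ε := lt_min (by linarith) (by linarith)
  have hεq : ε ≤ p.2 - q.2 := min_le_left _ _
  have hεq' : ε ≤ q'.2 - p.2 := min_le_right _ _
  set δ : ℝ := min (d / 2) (ε * d / (4 * (d + K))) with hδ
  have hδ0 : 0 < δ := lt_min (by positivity) (by positivity)
  refine ⟨δ, hδ0, ?_⟩
  intro u hu hu1
  rw [Prod.dist_eq, Real.dist_eq, Real.dist_eq] at hu
  have h1 : |u.1 - p.1| < δ := lt_of_le_of_lt (le_max_left _ _) hu
  have h2 : |u.2 - p.2| < δ := lt_of_le_of_lt (le_max_right _ _) hu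
  have hδ1 : δ ≤ d / 2 := min_le_left _ _
  have hδ2 : δ ≤ ε * d / (4 * (d + K)) := min_le_right _ _
  set c : ℝ := (u.1 - p.1) / d with hc
  have hc0 : 0 ≤ c := div_nonneg (by linarith) hd0.le
  have h1' : u.1 - p.1 < δ := lt_of_le_of_lt (le_abs_self _) h1
  have hchalf : c ≤ 1 / 2 := by
    rw [hc, div_le_div_iff₀ hd0 (by norm_num : (0:ℝ) < 2)]
    nlinarith
  have h1c : (1 : ℝ) - c ≥ 1 / 2 := by linarith
  have h1c0 : (0 : ℝ) < 1 - c := by linarith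
  set w2 : ℝ := (u.2 - c * r.2) / (1 - c) with hw2
  -- bound |w2 - p.2| < ε
  have hcK : c * K ≤ δ / d * K := by
    apply mul_le_mul_of_nonneg_right _ hK0
    rw [hc]
    gcongr
  have hnum : |u.2 - p.2 + c * (p.2 - r.2)| < δ + δ / d * K := by
    calc |u.2 - p.2 + c * (p.2 - r.2)| ≤ |u.2 - p.2| + |c * (p.2 - r.2)| := abs_add_le _ _
      _ = |u.2 - p.2| + c * K := by rw [abs_mul, abs_of_nonneg hc0, hK]
      _ < δ + δ / d * K := by
          apply add_lt_add_of_lt_of_le h2 hcK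
  have hbound : δ + δ / d * K ≤ ε / 2 := by
    have h4 : δ * (d + K) ≤ ε * d / 4 := by
      calc δ * (d + K) ≤ (ε * d / (4 * (d + K))) * (d + K) := by
            apply mul_le_mul_of_nonneg_right hδ2 (by linarith)
        _ = ε * d / 4 := by field_simp
    have heq : δ + δ / d * K = (δ * d + δ * K) / d := by field_simp
    rw [heq, div_le_iff₀ hd0]
    nlinarith [h4, hε0, hd0]
  have hweq : w2 - p.2 = (u.2 - p.2 + c * (p.2 - r.2)) / (1 - c) := by
    rw [hw2]; field_simp; ring
  have hwb : |w2 - p.2| < ε := by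
    rw [hweq, abs_div, abs_of_pos h1c0]
    calc |u.2 - p.2 + c * (p.2 - r.2)| / (1 - c) ≤ |u.2 - p.2 + c * (p.2 - r.2)| / (1/2) := by
          apply div_le_div_of_nonneg_left (abs_nonneg _) (by norm_num) h1c -- direction?
      _ = 2 * |u.2 - p.2 + c * (p.2 - r.2)| := by ring
      _ < 2 * (δ + δ / d * K) := by linarith
      _ ≤ ε := by linarith
  have hwlo : q.2 < w2 := by
    have := abs_lt.mp hwb
    linarith [this.1]
  have hwhi : w2 < q'.2 := by
    have := abs_lt.mp hwb
    linarith [this.2]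
  set t : ℝ := (w2 - q.2) / (q'.2 - q.2) with ht
  have hqq' : (0:ℝ) < q'.2 - q.2 := by linarith
  have ht0 : 0 ≤ t := div_nonneg (by linarith) hqq'.le
  have ht1 : t ≤ 1 := by
    rw [ht, div_le_one hqq']; linarith
  have hw : ((1 - t) • q + t • q' : ℝ × ℝ) ∈ C := hconv hq hq' (by linarith) ht0 (by ring)
  have hfin : u = (1 - c) • ((1 - t) • q + t • q') + c • r := by
    have hw1 : ((1 - t) • q + t • q' : ℝ × ℝ).1 = p.1 := by
      simp only [Prod.fst_add, Prod.smul_fst, smul_eq_mul, hq1, hq'1]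
      ring
    have hw2' : ((1 - t) • q + t • q' : ℝ × ℝ).2 = w2 := by
      simp only [Prod.snd_add, Prod.smul_snd, smul_eq_mul]
      rw [ht]; field_simp; ring
    apply Prod.ext
    · simp only [Prod.fst_add, Prod.smul_fst, smul_eq_mul, hw1]
      rw [hc]; field_simp; ring
    · simp only [Prod.snd_add, Prod.smul_snd, smul_eq_mul, hw2']
      rw [hw2]; field_simp; ring
  rw [hfin]
  exact hconv hw hr (by linarith) hc0 (by ring)

lemma halfball_left {C : Set (ℝ × ℝ)} (hconv : Convex ℝ C)
    (p q q' l : ℝ × ℝ) (hq : q ∈ C) (hq' : q' ∈ C) (hl : l ∈ C)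
    (hq1 : q.1 = p.1) (hq'1 : q'.1 = p.1)
    (hq2 : q.2 < p.2) (hq'2 : p.2 < q'.2) (hl1 : l.1 < p.1) :
    ∃ δ > 0, ∀ u : ℝ × ℝ, dist u p < δ → u.1 ≤ p.1 → u ∈ C := by
  set f : ℝ × ℝ → ℝ × ℝ := fun z => (-z.1, z.2) with hf
  have hflin : IsLinearMap ℝ f := by
    constructor
    · intro a b; simp [hf, Prod.ext_iff]; ring
    · intro c a; simp [hf, Prod.ext_iff]
  have hC' : Convex ℝ (f '' C) := hconv.is_linear_image hflin
  have hdist : ∀ a b : ℝ × ℝ, dist (f a) (f b) = dist a b := by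
    intro a b
    simp only [hf, Prod.dist_eq, Real.dist_eq]
    congr 1
    rw [show -a.1 - -b.1 = -(a.1 - b.1) by ring, abs_neg]
  obtain ⟨δ, hδ0, hδ⟩ := halfball_right hC' (f p) (f q) (f q') (f l)
    (mem_image_of_mem f hq) (mem_image_of_mem f hq') (mem_image_of_mem f hl)
    (by simp [hf, hq1]) (by simp [hf, hq'1]) (by simpa [hf]) (by simpa [hf])
    (by show -p.1 < -l.1; linarith)
  refine ⟨δ, hδ0, fun u hu hu1 => ?_⟩
  have hmem : f u ∈ f '' C := by
    apply hδ (f u)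
    · rw [hdist]; exact hu
    · show -p.1 ≤ -u.1; linarith
  obtain ⟨v, hv, hveq⟩ := hmem
  have hvu : v = u := by
    have h2 := congrArg f hveq
    simpa [hf, Prod.ext_iff] using h2
  rwa [hvu] at hv

/-- Correctness of the vertical-slice decomposition: for a nonempty compact convex plane
set `C` and a point `p` whose abscissa lies strictly between the horizontal extremes of
`C`, `p` is interior to `C` iff the vertical fiber of `C` at `p.1` contains points
strictly below and strictly above `p`; equivalently, `p` is outside the interior iff it
lies weakly above every point of the fiber or weakly below every point of the fiber. -/
theorem interior_iff_fiber_above_below (C : Set (ℝ × ℝ))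
    (hne : C.Nonempty) (hc : IsCompact C) (hconv : Convex ℝ C)
    (p : ℝ × ℝ)
    (hlo : sInf (Prod.fst '' C) < p.1) (hhi : p.1 < sSup (Prod.fst '' C)) :
    (p ∈ interior C ↔
      ∃ q ∈ C, ∃ q' ∈ C, q.1 = p.1 ∧ q'.1 = p.1 ∧ q.2 < p.2 ∧ p.2 < q'.2) ∧
    (p ∉ interior C ↔
      (∀ y : ℝ, (p.1, y) ∈ C → y ≤ p.2) ∨ (∀ y : ℝ, (p.1, y) ∈ C → p.2 ≤ y)) := by
  have hfne : (Prod.fst '' C).Nonempty := hne.image _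
  have hbdd_below : BddBelow (Prod.fst '' C) := (hc.image continuous_fst).bddBelow
  have hbdd_above : BddAbove (Prod.fst '' C) := (hc.image continuous_fst).bddAbove
  have main : p ∈ interior C ↔
      ∃ q ∈ C, ∃ q' ∈ C, q.1 = p.1 ∧ q'.1 = p.1 ∧ q.2 < p.2 ∧ p.2 < q'.2 := by
    constructor
    · intro hp
      rw [mem_interior_iff_mem_nhds, Metric.mem_nhds_iff] at hp
      obtain ⟨ε, hε0, hball⟩ := hp
      refine ⟨(p.1, p.2 - ε/2), hball ?_, (p.1, p.2 + ε/2), hball ?_, rfl, rfl, by linarith, by linarith⟩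
      · simp only [Metric.mem_ball, Prod.dist_eq, Real.dist_eq]
        rw [show p.2 - ε/2 - p.2 = -(ε/2) by ring, abs_neg,
          abs_of_nonneg (by linarith : (0:ℝ) ≤ ε/2), sub_self, abs_zero,
          max_eq_right (by linarith : (0:ℝ) ≤ ε/2)]
        linarith
      · simp only [Metric.mem_ball, Prod.dist_eq, Real.dist_eq]
        rw [show p.2 + ε/2 - p.2 = ε/2 by ring,
          abs_of_nonneg (by linarith : (0:ℝ) ≤ ε/2), sub_self, abs_zero,
          max_eq_right (by linarith : (0:ℝ) ≤ ε/2)]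
        linarith
    · rintro ⟨q, hq, q', hq', hq1, hq'1, hq2, hq'2⟩
      obtain ⟨xl, ⟨l, hlC, hlfst⟩, hlx⟩ := (csInf_lt_iff hbdd_below hfne).mp hlo
      obtain ⟨xr, ⟨r, hrC, hrfst⟩, hrx⟩ := (lt_csSup_iff hbdd_above hfne).mp hhi
      have hl1 : l.1 < p.1 := by rw [hlfst]; exact hlx
      have hr1 : p.1 < r.1 := by rw [hrfst]; exact hrx
      obtain ⟨δ₁, hδ₁0, hδ₁⟩ := halfball_right hconv p q q' r hq hq' hrC hq1 hq'1 hq2 hq'2 hr1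
      obtain ⟨δ₂, hδ₂0, hδ₂⟩ := halfball_left hconv p q q' l hq hq' hlC hq1 hq'1 hq2 hq'2 hl1
      rw [mem_interior_iff_mem_nhds, Metric.mem_nhds_iff]
      refine ⟨min δ₁ δ₂, lt_min hδ₁0 hδ₂0, fun u hu => ?_⟩
      rw [Metric.mem_ball] at hu
      rcases le_total p.1 u.1 with h | h
      · exact hδ₁ u (lt_of_lt_of_le hu (min_le_left _ _)) h
      · exact hδ₂ u (lt_of_lt_of_le hu (min_le_right _ _)) h
  refine ⟨main, ?_⟩
  rw [main]
  constructor
  · intro hno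
    push_neg at hno
    by_contra hcon
    push_neg at hcon
    obtain ⟨⟨y1, hy1, hy1'⟩, ⟨y2, hy2, hy2'⟩⟩ := hcon
    exact absurd (hno (p.1, y2) hy2 (p.1, y1) hy1 rfl rfl hy2') (not_le.mpr hy1')
  · rintro h ⟨q, hq, q', hq', hq1, hq'1, hq2, hq'2⟩
    have hqm : (p.1, q.2) ∈ C := by rw [← hq1]; simpa using hq
    have hq'm : (p.1, q'.2) ∈ C := by rw [← hq'1]; simpa using hq'
    rcases h with h | h
    · exact absurd (h q'.2 hq'm) (not_le.mpr hq'2)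
    · exact absurd (h q.2 hqm) (not_le.mpr hq2)
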